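/- Let X be a finite set, φ¹, φ² : X → [0,1], K a nonnegative integer, and f(B) = max{ ∑_{x∈S} φ²(x) : S ⊆ B, |S| ≤ K } for B ⊆ X. Consider the linear program D: minimize θ + ∑_{x∈X} φ¹(x)·γ(x) over θ ∈ ℝ and γ : X → ℝ subject to θ + ∑_{x∈B} γ(x) ≥ f(B) for every B ⊆ X. Then D attains its optimal value at a feasible point (θ*, γ*) with θ* ≥ 0 and γ*(x) ≥ 0 for every x ∈ X. -/

import Mathlib

open scoped Classical
noncomputable section

/-- `max { ∑_{x ∈ S} φ x : S ⊆ s, |S| ≤ K }`. -/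
def bestSum {α : Type*} (s : Finset α) (K : ℕ) (φ : α → ℝ) : ℝ :=
  (s.powerset.filter fun S => S.card ≤ K).sup' ⟨∅, by simp⟩ fun S => ∑ x ∈ S, φ x

lemma bestSum_nonneg {α : Type*} (s : Finset α) (K : ℕ) (φ : α → ℝ) :
    0 ≤ bestSum s K φ := by
  have h : (∅ : Finset α) ∈ s.powerset.filter fun S => S.card ≤ K := by simp
  rw [bestSum]
  calc (0:ℝ) = ∑ x ∈ (∅ : Finset α), φ x := by simp
    _ ≤ _ := Finset.le_sup' (fun S => ∑ x ∈ S, φ x) h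

lemma bestSum_empty {α : Type*} (K : ℕ) (φ : α → ℝ) : bestSum (∅ : Finset α) K φ = 0 := by
  simp [bestSum, Finset.powerset_empty, Finset.filter_singleton]

lemma bestSum_mono {α : Type*} {s t : Finset α} (h : s ⊆ t) (K : ℕ) (φ : α → ℝ) :
    bestSum s K φ ≤ bestSum t K φ := by
  rw [bestSum]
  apply Finset.sup'_le
  intro S hS
  simp only [Finset.mem_filter, Finset.mem_powerset] at hS
  rw [bestSum]
  exact Finset.le_sup' (f := fun S => ∑ x ∈ S, φ x)
    (by simp [Finset.mem_filter, Finset.mem_powerset, hS.1.trans h, hS.2])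

lemma bestSum_split {α : Type*} (s : Finset α) (K : ℕ) (φ : α → ℝ) (hφ : ∀ x, 0 ≤ φ x)
    (p : α → Prop) [DecidablePred p] :
    bestSum s K φ ≤ bestSum (s.filter p) K φ + ∑ x ∈ s.filter (fun x => ¬ p x), φ x := by
  rw [bestSum]
  apply Finset.sup'_le
  intro S hS
  simp only [Finset.mem_filter, Finset.mem_powerset] at hS
  have h1 : ∑ x ∈ S.filter p, φ x ≤ bestSum (s.filter p) K φ := by
    rw [bestSum]
    apply Finset.le_sup' (f := fun S => ∑ x ∈ S, φ x)
    simp only [Finset.mem_filter, Finset.mem_powerset]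
    exact ⟨Finset.filter_subset_filter _ hS.1, le_trans (Finset.card_le_card (Finset.filter_subset _ _)) hS.2⟩
  have h2 : ∑ x ∈ S.filter (fun x => ¬ p x), φ x ≤ ∑ x ∈ s.filter (fun x => ¬ p x), φ x :=
    Finset.sum_le_sum_of_subset_of_nonneg (Finset.filter_subset_filter _ hS.1)
      (fun x _ _ => hφ x)
  calc ∑ x ∈ S, φ x = ∑ x ∈ S.filter p, φ x + ∑ x ∈ S.filter (fun x => ¬ p x), φ x :=
        (Finset.sum_filter_add_sum_filter_not S p φ).symm
    _ ≤ _ := add_le_add h1 h2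

/-- the dual `D` of the per-user distribution problem attains its optimal
value at a feasible point with nonnegative `θ` and `γ`. -/
theorem dual_attains_nonneg_optimum {X : Type*} [Fintype X] (φ1 φ2 : X → ℝ)
    (hφ1 : ∀ x, 0 ≤ φ1 x ∧ φ1 x ≤ 1) (hφ2 : ∀ x, 0 ≤ φ2 x ∧ φ2 x ≤ 1) (K : ℕ) :
    ∃ (θ : ℝ) (γ : X → ℝ),
      (∀ B : Finset X, bestSum B K φ2 ≤ θ + ∑ x ∈ B, γ x) ∧
      0 ≤ θ ∧ (∀ x, 0 ≤ γ x) ∧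
      ∀ (θ' : ℝ) (γ' : X → ℝ),
        (∀ B : Finset X, bestSum B K φ2 ≤ θ' + ∑ x ∈ B, γ' x) →
        θ + ∑ x, φ1 x * γ x ≤ θ' + ∑ x, φ1 x * γ' x := by
  set M : ℝ := bestSum (Finset.univ : Finset X) K φ2 with hM
  have hM0 : 0 ≤ M := bestSum_nonneg _ _ _
  -- objective
  set g : ℝ × (X → ℝ) → ℝ := fun p => p.1 + ∑ x, φ1 x * p.2 x with hg
  have hgcont : Continuous g := by
    apply continuous_fst.add
    exact continuous_finset_sum _ fun x _ =>
      (continuous_const.mul ((continuous_apply x).comp continuous_snd))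
  -- compact feasible region
  set S : Set (ℝ × (X → ℝ)) := {p | (∀ B : Finset X, bestSum B K φ2 ≤ p.1 + ∑ x ∈ B, p.2 x) ∧
      p.1 ∈ Set.Icc 0 M ∧ ∀ x, p.2 x ∈ Set.Icc (0:ℝ) 1} with hSdef
  have hSclosed : IsClosed S := by
    have : S = (⋂ B : Finset X, {p : ℝ × (X → ℝ) | bestSum B K φ2 ≤ p.1 + ∑ x ∈ B, p.2 x}) ∩
        ((fun p : ℝ × (X → ℝ) => p.1) ⁻¹' Set.Icc 0 M ∩
          ⋂ x : X, {p : ℝ × (X → ℝ) | p.2 x ∈ Set.Icc (0:ℝ) 1}) := by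
      ext p; simp [hSdef, Set.mem_iInter]
    rw [this]
    refine (isClosed_iInter fun B => isClosed_le continuous_const ?_).inter
      ((isClosed_Icc.preimage continuous_fst).inter (isClosed_iInter fun x =>
        isClosed_Icc.preimage ((continuous_apply x).comp continuous_snd)))
    exact continuous_fst.add (continuous_finset_sum _ fun x _ => (continuous_apply x).comp continuous_snd)
  have hSsub : S ⊆ Set.Icc 0 M ×ˢ Set.pi Set.univ (fun _ : X => Set.Icc (0:ℝ) 1) := by
    rintro p ⟨_, h1, h2⟩
    exact ⟨h1, fun x _ => h2 x⟩
  have hScompact : IsCompact S :=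
    ((isCompact_Icc.prod (isCompact_univ_pi fun _ => isCompact_Icc)).of_isClosed_subset
      hSclosed hSsub)
  have hSne : (⟨M, fun _ => 0⟩ : ℝ × (X → ℝ)) ∈ S := by
    refine ⟨fun B => ?_, ⟨hM0, le_refl M⟩, fun x => ⟨le_refl 0, zero_le_one⟩⟩
    simpa using bestSum_mono (Finset.subset_univ B) K φ2
  obtain ⟨p, hpS, hmin⟩ := hScompact.exists_isMinOn ⟨_, hSne⟩ hgcont.continuousOn
  refine ⟨p.1, p.2, hpS.1, hpS.2.1.1, fun x => (hpS.2.2 x).1, ?_⟩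
  intro θ' γ' hfeas'
  -- truncation
  set θ1 : ℝ := θ' + ∑ x, min (γ' x) 0 with hθ1
  set γ1 : X → ℝ := fun x => max (γ' x) 0 with hγ1
  set γ2 : X → ℝ := fun x => min (γ1 x) 1 with hγ2
  have hγ1nn : ∀ x, 0 ≤ γ1 x := fun x => le_max_right _ _
  have hγ2nn : ∀ x, 0 ≤ γ2 x := fun x => le_min (hγ1nn x) zero_le_one
  have feas1 : ∀ B : Finset X, bestSum B K φ2 ≤ θ1 + ∑ x ∈ B, γ1 x := by
    intro B
    set C : Finset X := B ∪ Finset.univ.filter (fun x => γ' x < 0) with hC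
    have key : θ1 + ∑ x ∈ B, γ1 x = θ' + ∑ x ∈ C, γ' x := by
      have : ∑ x ∈ C, γ' x = ∑ x : X, (if x ∈ C then γ' x else 0) := by
        rw [Finset.sum_ite_mem]
        simp
      rw [this, hθ1]
      have : (∑ x, min (γ' x) 0) + ∑ x ∈ B, γ1 x
          = ∑ x : X, (min (γ' x) 0 + if x ∈ B then γ1 x else 0) := by
        rw [Finset.sum_add_distrib]
        congr 1
        rw [Finset.sum_ite_mem]
        simp
      rw [add_assoc, this]
      congr 1
      apply Finset.sum_congr rfl
      intro x _
      by_cases hxB : x ∈ B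
      · have hxC : x ∈ C := Finset.mem_union_left _ hxB
        simp [hxB, hxC, hγ1, min_add_max]
      · by_cases hneg : γ' x < 0
        · have hxC : x ∈ C := Finset.mem_union_right _ (by simp [hneg])
          simp [hxB, hxC, min_eq_left hneg.le]
        · have hxC : x ∉ C := by simp [hC, hxB, hneg]
          simp [hxB, hxC, min_eq_right (not_lt.mp hneg)]
    rw [key]
    exact le_trans (bestSum_mono (Finset.subset_union_left) K φ2) (hfeas' C)
  have feas2 : ∀ B : Finset X, bestSum B K φ2 ≤ θ1 + ∑ x ∈ B, γ2 x := by
    intro B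
    have split := bestSum_split B K φ2 (fun x => (hφ2 x).1) (fun x => γ1 x ≤ 1)
    have h1 : bestSum (B.filter fun x => γ1 x ≤ 1) K φ2 ≤ θ1 + ∑ x ∈ B.filter (fun x => γ1 x ≤ 1), γ1 x :=
      feas1 _
    have h2 : ∑ x ∈ B.filter (fun x => ¬ γ1 x ≤ 1), φ2 x ≤ ∑ x ∈ B.filter (fun x => ¬ γ1 x ≤ 1), (1:ℝ) :=
      Finset.sum_le_sum fun x _ => (hφ2 x).2
    have h3 : ∑ x ∈ B, γ2 x = ∑ x ∈ B.filter (fun x => γ1 x ≤ 1), γ1 x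
        + ∑ x ∈ B.filter (fun x => ¬ γ1 x ≤ 1), (1:ℝ) := by
      rw [← Finset.sum_filter_add_sum_filter_not B (fun x => γ1 x ≤ 1) γ2]
      congr 1
      · exact Finset.sum_congr rfl fun x hx => min_eq_left (Finset.mem_filter.mp hx).2
      · exact Finset.sum_congr rfl fun x hx =>
          min_eq_right (le_of_lt (not_le.mp (Finset.mem_filter.mp hx).2))
    calc bestSum B K φ2 ≤ _ := split
      _ ≤ (θ1 + ∑ x ∈ B.filter (fun x => γ1 x ≤ 1), γ1 x)
          + ∑ x ∈ B.filter (fun x => ¬ γ1 x ≤ 1), (1:ℝ) := add_le_add h1 h2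
      _ = θ1 + ∑ x ∈ B, γ2 x := by rw [h3]; ring
  have hθ1nn : 0 ≤ θ1 := by
    have := feas2 ∅
    simpa [bestSum_empty] using this
  set θ2 : ℝ := min θ1 M with hθ2
  have hqS : (⟨θ2, γ2⟩ : ℝ × (X → ℝ)) ∈ S := by
    refine ⟨fun B => ?_, ⟨le_min hθ1nn hM0, min_le_right _ _⟩,
      fun x => ⟨hγ2nn x, min_le_right _ _⟩⟩
    rcases le_total θ1 M with h | h
    · rw [hθ2, min_eq_left h]; exact feas2 B
    · rw [hθ2, min_eq_right h]
      calc bestSum B K φ2 ≤ M := bestSum_mono (Finset.subset_univ B) K φ2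
        _ ≤ M + ∑ x ∈ B, γ2 x := le_add_of_nonneg_right (Finset.sum_nonneg fun x _ => hγ2nn x)
  have hobj : g ⟨θ2, γ2⟩ ≤ θ' + ∑ x, φ1 x * γ' x := by
    have step1 : g ⟨θ2, γ2⟩ ≤ θ1 + ∑ x, φ1 x * γ1 x := by
      refine add_le_add (min_le_left _ _) (Finset.sum_le_sum fun x _ => ?_)
      exact mul_le_mul_of_nonneg_left (min_le_left _ _) (hφ1 x).1
    have step2 : θ1 + ∑ x, φ1 x * γ1 x ≤ θ' + ∑ x, φ1 x * γ' x := by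
      rw [hθ1, add_assoc, ← Finset.sum_add_distrib]
      refine add_le_add_right (Finset.sum_le_sum fun x _ => ?_) θ'
      by_cases h : 0 ≤ γ' x
      · simp [hγ1, min_eq_right h, max_eq_left h]
      · push_neg at h
        rw [min_eq_left h.le, hγ1]
        simp only [max_eq_right h.le]
        calc γ' x + φ1 x * 0 = 1 * γ' x := by ring
          _ ≤ φ1 x * γ' x := mul_le_mul_of_nonpos_right (hφ1 x).2 h.le
    exact step1.trans step2
  exact le_trans (hmin hqS) hobj
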